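/- Let φ(t) satisfy dφ/dt = v(t)^{m-1} v*^{m+1} (φ sin φ)/(2π) with φ(0) = φ_0 ∈ (0, π), where r < v(t) < R for all t > 0 for constants r, R > 0 and m ≥ 1. Then for all t > 0: π - 2 cot(φ_0/2) e^{-(φ_0/(2π)) r^{m-1} v*^{m+1} t} < φ(t) < π - 2 cot(φ_0/2) e^{-(1/2) R^{m-1} v*^{m+1} t} + (2/3) cot^3(φ_0/2) e^{-(3/2) R^{m-1} v*^{m+1} t}. -/

import Mathlib

open Real Set

lemma aux_arctan_lt_self {x : ℝ} (hx : 0 < x) : Real.arctan x < x := by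
  have h1 : 0 < Real.arctan x := by
    have := Real.arctan_strictMono (show (0:ℝ) < x from hx)
    simpa [Real.arctan_zero] using this
  have h2 := Real.lt_tan h1 (Real.arctan_lt_pi_div_two x)
  rwa [Real.tan_arctan] at h2

lemma aux_cubic_lt_arctan {x : ℝ} (hx : 0 < x) : x - x ^ 3 / 3 < Real.arctan x := by
  have key : StrictMonoOn (fun z : ℝ => Real.arctan z - z + z ^ 3 / 3) (Set.Ici 0) := by
    apply strictMonoOn_of_deriv_pos (convex_Ici 0)
    · exact (Real.continuous_arctan.sub continuous_id).add (by continuity) |>.continuousOn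
    · intro z hz
      rw [interior_Ici] at hz
      have hd : HasDerivAt (fun z : ℝ => Real.arctan z - z + z ^ 3 / 3)
          (1 / (1 + z ^ 2) - 1 + (3 * z ^ 2) / 3) z := by
        have h1 := (Real.hasDerivAt_arctan z).sub (hasDerivAt_id z)
        have h2 : HasDerivAt (fun z : ℝ => z ^ 3 / 3) ((3 * z ^ 2) / 3) z := by
          simpa using (hasDerivAt_pow 3 z).div_const 3
        exact h1.add h2
      rw [hd.deriv]
      have hz' : (0:ℝ) < z := hz
      have hp : (0:ℝ) < 1 + z ^ 2 := by positivity
      have hone : (1 / (1 + z ^ 2)) * (1 + z ^ 2) = 1 := by field_simp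
      nlinarith [sq_nonneg z, sq_nonneg (z ^ 2), mul_pos hz' hz']
  have h := key self_mem_Ici (le_of_lt hx) hx
  simp only [Real.arctan_zero] at h
  norm_num at h
  linarith

lemma aux_xsin {x : ℝ} (hx : x ≤ Real.pi) : x * Real.sin x ≤ Real.pi * (Real.pi - x) := by
  rcases le_or_gt 0 x with h | h
  · have hs0 : 0 ≤ Real.sin x := Real.sin_nonneg_of_nonneg_of_le_pi h hx
    have h1 : Real.sin x ≤ Real.pi - x := by
      rw [← Real.sin_pi_sub]
      exact Real.sin_le (by linarith)
    have h2 : x * Real.sin x ≤ Real.pi * Real.sin x :=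
      mul_le_mul_of_nonneg_right hx hs0
    have h3 : Real.pi * Real.sin x ≤ Real.pi * (Real.pi - x) :=
      mul_le_mul_of_nonneg_left h1 Real.pi_pos.le
    linarith
  · have h1 : x * Real.sin x ≤ x * (-1) :=
      mul_le_mul_of_nonpos_left (Real.neg_one_le_sin x) h.le
    nlinarith [Real.pi_gt_three]

set_option maxHeartbeats 1000000 in
/-- Angle bounds for the `(m+1)`-layer single ReLU neuron gradient flow with balanced
initialization, assuming `r < v(t) < R` for all `t > 0`. -/
theorem multi_layer_angle_bounds
    (m : ℕ) (hm : 1 ≤ m) (vs r R : ℝ) (hvs : 0 < vs) (hr : 0 < r) (hR : 0 < R)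
    (v φ : ℝ → ℝ) (φ0 : ℝ) (hinit : φ 0 = φ0) (h0 : 0 < φ0 ∧ φ0 < π)
    (hbound : ∀ t > 0, r < v t ∧ v t < R)
    (hφ : ∀ t, HasDerivAt φ
      ((v t)^(m-1) * vs^(m+1) * (φ t * Real.sin (φ t)) / (2*π)) t) :
    ∀ t > 0,
      π - 2 * Real.cot (φ0/2) * Real.exp (-(φ0/(2*π)) * r^(m-1) * vs^(m+1) * t) < φ t ∧
      φ t < π - 2 * Real.cot (φ0/2) * Real.exp (-(1/2) * R^(m-1) * vs^(m+1) * t)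
              + (2/3) * (Real.cot (φ0/2))^3
                * Real.exp (-(3/2) * R^(m-1) * vs^(m+1) * t) := by
  obtain ⟨hφ0, hφπ⟩ := h0
  have hπ := Real.pi_pos
  have hcont : Continuous φ := (Differentiable.continuous fun s => (hφ s).differentiableAt)
  set C : ℝ := R ^ (m - 1) * vs ^ (m + 1) with hCdef
  have hCpos : 0 < C := by positivity
  have hcrpos : 0 < r ^ (m - 1) * vs ^ (m + 1) := by positivity
  have hcle : ∀ x > 0, (v x) ^ (m - 1) * vs ^ (m + 1) ≤ C := by
    intro x hx
    obtain ⟨h1, h2⟩ := hbound x hx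
    have : (v x) ^ (m - 1) ≤ R ^ (m - 1) :=
      pow_le_pow_left₀ (le_of_lt (hr.trans h1)) h2.le _
    have hv : (0:ℝ) ≤ vs ^ (m+1) := by positivity
    exact mul_le_mul_of_nonneg_right this hv
  have hcge : ∀ x > 0, r ^ (m - 1) * vs ^ (m + 1) ≤ (v x) ^ (m - 1) * vs ^ (m + 1) := by
    intro x hx
    obtain ⟨h1, _⟩ := hbound x hx
    have : r ^ (m - 1) ≤ (v x) ^ (m - 1) := pow_le_pow_left₀ hr.le h1.le _
    have hv : (0:ℝ) ≤ vs ^ (m+1) := by positivity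
    exact mul_le_mul_of_nonneg_right this hv
  have hcpos : ∀ x > 0, 0 < (v x) ^ (m - 1) * vs ^ (m + 1) :=
    fun x hx => lt_of_lt_of_le hcrpos (hcge x hx)
  set K : ℝ := C / 2 with hKdef
  have hKpos : 0 < K := by positivity
  -- exponential derivative helper
  have hexp : ∀ (a x : ℝ), HasDerivAt (fun s => Real.exp (a * s)) (a * Real.exp (a * x)) x := by
    intro a x
    have h := ((hasDerivAt_id x).const_mul a).exp
    simpa [mul_comm] using h
  -- Step 1: φ stays below π
  have hlt_pi : ∀ x, 0 ≤ x → φ x < π := by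
    by_contra hcon
    push_neg at hcon
    obtain ⟨t0, ht0, hπle⟩ := hcon
    have hS : ∃ t1, (t1 ∈ Icc 0 t0 ∧ φ t1 = π) ∧
        ∀ s, 0 ≤ s → s < t1 → φ s < π := by
      set S : Set ℝ := Icc 0 t0 ∩ φ ⁻¹' {π} with hSdef
      have hSne : S.Nonempty := by
        have hmem : π ∈ Icc (φ 0) (φ t0) := ⟨by rw [hinit]; linarith, hπle⟩
        obtain ⟨s, hs, hsπ⟩ := intermediate_value_Icc ht0 hcont.continuousOn hmem
        exact ⟨s, hs, by simpa using hsπ⟩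
      have hSclosed : IsClosed S := isClosed_Icc.inter (isClosed_singleton.preimage hcont)
      have hSbdd : BddBelow S := ⟨0, fun x hx => hx.1.1⟩
      refine ⟨sInf S, ?_, ?_⟩
      · have := hSclosed.csInf_mem hSne hSbdd
        exact ⟨this.1, by simpa using this.2⟩
      · intro s hs0 hst
        by_contra hge
        push_neg at hge
        have hmem : π ∈ Icc (φ 0) (φ s) := ⟨by rw [hinit]; linarith, hge⟩
        obtain ⟨u, hu, huπ⟩ := intermediate_value_Icc hs0 hcont.continuousOn hmem
        have hinf := hSclosed.csInf_mem hSne hSbdd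
        have ht1le : sInf S ≤ t0 := (hSclosed.csInf_mem hSne hSbdd).1.2
        have huS : u ∈ S := ⟨⟨hu.1, hu.2.trans (hst.le.trans ht1le)⟩, by simpa using huπ⟩
        have := csInf_le hSbdd huS
        linarith [hu.2]
    obtain ⟨t1, ⟨⟨ht1a, ht1b⟩, ht1π⟩, hbefore⟩ := hS
    have ht1pos : 0 < t1 := by
      rcases eq_or_lt_of_le ht1a with h | h
      · exfalso; rw [← h, hinit] at ht1π; linarith
      · exact h
    have hmono : MonotoneOn (fun s => (π - φ s) * Real.exp (K * s)) (Icc 0 t1) := by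
      have hdiff : ∀ x : ℝ, HasDerivAt (fun s => (π - φ s) * Real.exp (K * s))
          ((-((v x) ^ (m-1) * vs ^ (m+1) * (φ x * Real.sin (φ x)) / (2*π))) * Real.exp (K * x)
            + (π - φ x) * (K * Real.exp (K * x))) x := by
        intro x
        exact ((hφ x).const_sub π).mul (hexp K x)
      apply monotoneOn_of_deriv_nonneg (convex_Icc 0 t1)
      · exact Continuous.continuousOn (by fun_prop)
      · intro x _
        exact ((hdiff x).differentiableAt).differentiableWithinAt
      · intro x hx
        rw [interior_Icc] at hx
        have hxpos : 0 < x := hx.1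
        have hxlt : φ x < π := hbefore x hxpos.le hx.2
        rw [(hdiff x).deriv]
        have hA0 : 0 < (v x) ^ (m-1) * vs ^ (m+1) := hcpos x hxpos
        have hAC : (v x) ^ (m-1) * vs ^ (m+1) ≤ C := hcle x hxpos
        have hxs : φ x * Real.sin (φ x) ≤ π * (π - φ x) := aux_xsin hxlt.le
        have h1 : (v x) ^ (m-1) * vs ^ (m+1) * (φ x * Real.sin (φ x)) ≤ C * (π * (π - φ x)) := by
          rcases le_or_gt (φ x * Real.sin (φ x)) 0 with h | h
          · have hl : (v x) ^ (m-1) * vs ^ (m+1) * (φ x * Real.sin (φ x)) ≤ 0 :=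
              mul_nonpos_of_nonneg_of_nonpos hA0.le h
            have hr0 : 0 ≤ C * (π * (π - φ x)) :=
              mul_nonneg hCpos.le (mul_nonneg Real.pi_pos.le (by linarith))
            linarith
          · nlinarith [mul_le_mul_of_nonneg_right hAC h.le,
              mul_le_mul_of_nonneg_left hxs hCpos.le]
        have hkey : (v x) ^ (m-1) * vs ^ (m+1) * (φ x * Real.sin (φ x)) / (2*π)
            ≤ K * (π - φ x) := by
          rw [div_le_iff₀ (by positivity : (0:ℝ) < 2*π)]
          calc (v x) ^ (m-1) * vs ^ (m+1) * (φ x * Real.sin (φ x))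
              ≤ C * (π * (π - φ x)) := h1
            _ = K * (π - φ x) * (2*π) := by rw [hKdef]; ring
        nlinarith [mul_le_mul_of_nonneg_right hkey (Real.exp_pos (K * x)).le]
    have h01 : (π - φ 0) * Real.exp (K * 0) ≤ (π - φ t1) * Real.exp (K * t1) :=
      hmono (⟨le_refl 0, ht1pos.le⟩ : (0:ℝ) ∈ Icc 0 t1)
        (⟨ht1pos.le, le_refl t1⟩ : t1 ∈ Icc 0 t1) ht1pos.le
    rw [hinit, ht1π] at h01
    simp only [mul_zero, Real.exp_zero, mul_one, sub_self, zero_mul] at h01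
    linarith
  -- Step 2: φ stays positive
  have hpos : ∀ x, 0 ≤ x → 0 < φ x := by
    by_contra hcon
    push_neg at hcon
    obtain ⟨t0, ht0, hle⟩ := hcon
    have hS : ∃ t1, (t1 ∈ Icc 0 t0 ∧ φ t1 = 0) ∧
        ∀ s, 0 ≤ s → s < t1 → 0 < φ s := by
      set S : Set ℝ := Icc 0 t0 ∩ φ ⁻¹' {0} with hSdef
      have hSne : S.Nonempty := by
        have hmem : (0:ℝ) ∈ Icc (φ t0) (φ 0) := ⟨hle, by rw [hinit]; linarith⟩
        obtain ⟨s, hs, hsπ⟩ := intermediate_value_Icc' ht0 hcont.continuousOn hmem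
        exact ⟨s, hs, by simpa using hsπ⟩
      have hSclosed : IsClosed S := isClosed_Icc.inter (isClosed_singleton.preimage hcont)
      have hSbdd : BddBelow S := ⟨0, fun x hx => hx.1.1⟩
      refine ⟨sInf S, ?_, ?_⟩
      · have := hSclosed.csInf_mem hSne hSbdd
        exact ⟨this.1, by simpa using this.2⟩
      · intro s hs0 hst
        by_contra hge
        push_neg at hge
        have hmem : (0:ℝ) ∈ Icc (φ s) (φ 0) := ⟨hge, by rw [hinit]; linarith⟩
        obtain ⟨u, hu, huπ⟩ := intermediate_value_Icc' hs0 hcont.continuousOn hmem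
        have ht1le : sInf S ≤ t0 := (hSclosed.csInf_mem hSne hSbdd).1.2
        have huS : u ∈ S := ⟨⟨hu.1, hu.2.trans (hst.le.trans ht1le)⟩, by simpa using huπ⟩
        have := csInf_le hSbdd huS
        linarith [hu.2]
    obtain ⟨t1, ⟨⟨ht1a, ht1b⟩, ht1π⟩, hbefore⟩ := hS
    have ht1pos : 0 < t1 := by
      rcases eq_or_lt_of_le ht1a with h | h
      · exfalso; rw [← h, hinit] at ht1π; linarith
      · exact h
    have hmono : MonotoneOn φ (Icc 0 t1) := by
      apply monotoneOn_of_deriv_nonneg (convex_Icc 0 t1) hcont.continuousOn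
      · intro x _
        exact ((hφ x).differentiableAt).differentiableWithinAt
      · intro x hx
        rw [interior_Icc] at hx
        have hxpos : 0 < x := hx.1
        have hx1 : 0 < φ x := hbefore x hxpos.le hx.2
        have hx2 : φ x < π := hlt_pi x hxpos.le
        rw [(hφ x).deriv]
        have hA0 : 0 < (v x) ^ (m-1) * vs ^ (m+1) := hcpos x hxpos
        have hs : 0 < Real.sin (φ x) := Real.sin_pos_of_pos_of_lt_pi hx1 hx2
        positivity
    have h01 := hmono (⟨le_refl 0, ht1pos.le⟩ : (0:ℝ) ∈ Icc 0 t1)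
      (⟨ht1pos.le, le_refl t1⟩ : t1 ∈ Icc 0 t1) ht1pos.le
    rw [hinit, ht1π] at h01
    linarith
  -- Step 3: strict monotonicity
  have hsm : StrictMonoOn φ (Ici 0) := by
    apply strictMonoOn_of_deriv_pos (convex_Ici 0) hcont.continuousOn
    intro x hx
    rw [interior_Ici] at hx
    rw [(hφ x).deriv]
    have h1 : 0 < φ x := hpos x hx.le
    have h2 : φ x < π := hlt_pi x hx.le
    have h3 : 0 < Real.sin (φ x) := Real.sin_pos_of_pos_of_lt_pi h1 h2
    have h4 : 0 < (v x) ^ (m-1) * vs ^ (m+1) := hcpos x hx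
    positivity
  have hφ0lt : ∀ x, 0 < x → φ0 < φ x := by
    intro x hx
    have := hsm (self_mem_Ici) (mem_Ici.mpr hx.le) hx
    rwa [hinit] at this
  -- The cotangent substitution
  set y : ℝ → ℝ := fun s => Real.cos (φ s / 2) / Real.sin (φ s / 2) with hydef
  have hsinpos : ∀ s, 0 ≤ s → 0 < Real.sin (φ s / 2) := fun s hs =>
    Real.sin_pos_of_pos_of_lt_pi (by linarith [hpos s hs]) (by linarith [hlt_pi s hs, hπ])
  have hcospos : ∀ s, 0 ≤ s → 0 < Real.cos (φ s / 2) := fun s hs =>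
    Real.cos_pos_of_mem_Ioo ⟨by linarith [hpos s hs, hπ], by linarith [hlt_pi s hs]⟩
  have hypos : ∀ s, 0 ≤ s → 0 < y s := fun s hs => div_pos (hcospos s hs) (hsinpos s hs)
  have hy0 : y 0 = Real.cot (φ0 / 2) := by
    rw [Real.cot_eq_cos_div_sin, hydef]
    simp [hinit]
  have hy0pos : 0 < Real.cot (φ0 / 2) := hy0 ▸ hypos 0 le_rfl
  have hyderiv : ∀ x, 0 ≤ x → HasDerivAt y
      (-((v x) ^ (m-1) * vs ^ (m+1) * φ x / (2*π)) * y x) x := by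
    intro x hx
    have hs := hsinpos x hx
    have hu : HasDerivAt (fun s => φ s / 2)
        ((v x) ^ (m-1) * vs ^ (m+1) * (φ x * Real.sin (φ x)) / (2*π) / 2) x := (hφ x).div_const 2
    have hc : HasDerivAt (fun s => Real.cos (φ s / 2))
        (-Real.sin (φ x / 2) * ((v x) ^ (m-1) * vs ^ (m+1) * (φ x * Real.sin (φ x)) / (2*π) / 2)) x :=
      by have := (Real.hasDerivAt_cos (φ x / 2)).comp x hu; exact this
    have hsd : HasDerivAt (fun s => Real.sin (φ s / 2))
        (Real.cos (φ x / 2) * ((v x) ^ (m-1) * vs ^ (m+1) * (φ x * Real.sin (φ x)) / (2*π) / 2)) x :=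
      by have := (Real.hasDerivAt_sin (φ x / 2)).comp x hu; exact this
    have hdiv := hc.div hsd hs.ne'
    have hpy : Real.sin (φ x / 2) ^ 2 + Real.cos (φ x / 2) ^ 2 = 1 := Real.sin_sq_add_cos_sq _
    have hsin2 : Real.sin (φ x) = 2 * Real.sin (φ x / 2) * Real.cos (φ x / 2) := by
      have h2 := Real.sin_two_mul (φ x / 2)
      rw [show 2 * (φ x / 2) = φ x by ring] at h2
      rw [h2]
    have heq : (-Real.sin (φ x / 2) * ((v x) ^ (m-1) * vs ^ (m+1) * (φ x * Real.sin (φ x)) / (2*π) / 2) * Real.sin (φ x / 2)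
          - Real.cos (φ x / 2) * (Real.cos (φ x / 2) * ((v x) ^ (m-1) * vs ^ (m+1) * (φ x * Real.sin (φ x)) / (2*π) / 2)))
          / Real.sin (φ x / 2) ^ 2
        = -((v x) ^ (m-1) * vs ^ (m+1) * φ x / (2*π)) * y x := by
      have hnum : -Real.sin (φ x / 2) * ((v x) ^ (m-1) * vs ^ (m+1) * (φ x * Real.sin (φ x)) / (2*π) / 2) * Real.sin (φ x / 2)
          - Real.cos (φ x / 2) * (Real.cos (φ x / 2) * ((v x) ^ (m-1) * vs ^ (m+1) * (φ x * Real.sin (φ x)) / (2*π) / 2))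
          = -((v x) ^ (m-1) * vs ^ (m+1) * (φ x * Real.sin (φ x)) / (2*π) / 2) := by
        linear_combination (-((v x) ^ (m-1) * vs ^ (m+1) * (φ x * Real.sin (φ x)) / (2*π) / 2)) * hpy
      rw [hnum, hsin2]
      simp only [hydef]
      field_simp
    rw [← heq]
    exact hdiv
  -- φ in terms of arctan of y
  have hφ_eq : ∀ s, 0 ≤ s → φ s = π - 2 * Real.arctan (y s) := by
    intro s hs
    have h1 : y s = Real.tan (π/2 - φ s / 2) := by
      rw [Real.tan_pi_div_two_sub, Real.tan_eq_sin_div_cos, inv_div]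
    rw [h1, Real.arctan_tan (by linarith [hlt_pi s hs, hπ]) (by linarith [hpos s hs])]
    ring
  -- main bounds
  intro t ht
  constructor
  · -- lower bound
    set a : ℝ := φ0 / (2*π) * r ^ (m-1) * vs ^ (m+1) with hadef
    have hW : StrictAntiOn (fun s => y s * Real.exp (a * s)) (Icc 0 t) := by
      apply strictAntiOn_of_deriv_neg (convex_Icc 0 t)
      · apply ContinuousOn.mul
        · exact fun s hs => ((hyderiv s hs.1).continuousAt).continuousWithinAt
        · exact Continuous.continuousOn (by fun_prop)
      · intro x hx
        rw [interior_Icc] at hx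
        have hxpos : 0 < x := hx.1
        have hd := (hyderiv x hxpos.le).mul (hexp a x)
        rw [HasDerivAt.deriv (f := fun s => y s * Real.exp (a * s)) hd]
        have hyx : 0 < y x := hypos x hxpos.le
        have hex : 0 < Real.exp (a * x) := Real.exp_pos _
        have h5 : a < (v x) ^ (m-1) * vs ^ (m+1) * φ x / (2*π) := by
          rw [lt_div_iff₀ (by positivity : (0:ℝ) < 2*π)]
          have hge := hcge x hxpos
          have hφx := hφ0lt x hxpos
          have : a * (2*π) = r ^ (m-1) * vs ^ (m+1) * φ0 := by
            rw [hadef]; field_simp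
          rw [this]
          nlinarith [hcrpos, hφ0]
        nlinarith [mul_pos (mul_pos hyx hex) (sub_pos.mpr h5)]
    have hlt : y t * Real.exp (a * t) < y 0 * Real.exp (a * 0) :=
      hW (⟨le_refl 0, ht.le⟩ : (0:ℝ) ∈ Icc 0 t)
        (⟨ht.le, le_refl t⟩ : t ∈ Icc 0 t) ht
    simp only [mul_zero, Real.exp_zero, mul_one] at hlt
    rw [hy0] at hlt
    have hyt : y t < Real.cot (φ0/2) * Real.exp (-(a * t)) := by
      have he : 0 < Real.exp (a * t) := Real.exp_pos _
      rw [Real.exp_neg, ← div_eq_mul_inv, lt_div_iff₀ he]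
      exact hlt
    have harc : Real.arctan (y t) < y t := aux_arctan_lt_self (hypos t ht.le)
    have hexp_eq : Real.exp (-(φ0/(2*π)) * r^(m-1) * vs^(m+1) * t) = Real.exp (-(a * t)) := by
      congr 1
      rw [hadef]; ring
    rw [hφ_eq t ht.le, hexp_eq]
    nlinarith [hyt, harc]
  · -- upper bound
    have hW : StrictMonoOn (fun s => y s * Real.exp (K * s)) (Icc 0 t) := by
      apply strictMonoOn_of_deriv_pos (convex_Icc 0 t)
      · apply ContinuousOn.mul
        · exact fun s hs => ((hyderiv s hs.1).continuousAt).continuousWithinAt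
        · exact Continuous.continuousOn (by fun_prop)
      · intro x hx
        rw [interior_Icc] at hx
        have hxpos : 0 < x := hx.1
        have hd := (hyderiv x hxpos.le).mul (hexp K x)
        rw [HasDerivAt.deriv (f := fun s => y s * Real.exp (K * s)) hd]
        have hyx : 0 < y x := hypos x hxpos.le
        have hex : 0 < Real.exp (K * x) := Real.exp_pos _
        have h5 : (v x) ^ (m-1) * vs ^ (m+1) * φ x / (2*π) < K := by
          rw [div_lt_iff₀ (by positivity : (0:ℝ) < 2*π)]
          have h6 : K * (2*π) = C * π := by rw [hKdef]; ring
          rw [h6]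
          nlinarith [hcle x hxpos, hcpos x hxpos, hlt_pi x hxpos.le, hpos x hxpos.le]
        nlinarith [mul_pos (mul_pos hyx hex) (sub_pos.mpr h5)]
    have hgt : y 0 * Real.exp (K * 0) < y t * Real.exp (K * t) :=
      hW (⟨le_refl 0, ht.le⟩ : (0:ℝ) ∈ Icc 0 t)
        (⟨ht.le, le_refl t⟩ : t ∈ Icc 0 t) ht
    simp only [mul_zero, Real.exp_zero, mul_one] at hgt
    rw [hy0] at hgt
    set L : ℝ := Real.cot (φ0/2) * Real.exp (-(K * t)) with hLdef
    have hLpos : 0 < L := by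
      rw [hLdef]; positivity
    have hL : L < y t := by
      have he : 0 < Real.exp (K * t) := Real.exp_pos _
      rw [hLdef, Real.exp_neg, ← div_eq_mul_inv, div_lt_iff₀ he]
      exact hgt
    have h6 : Real.arctan L < Real.arctan (y t) := Real.arctan_strictMono hL
    have h7 : L - L ^ 3 / 3 < Real.arctan L := aux_cubic_lt_arctan hLpos
    have hE1 : Real.exp (-(1/2) * R^(m-1) * vs^(m+1) * t) = Real.exp (-(K * t)) := by
      congr 1
      rw [hKdef, hCdef]; ring
    have hE2 : Real.exp (-(3/2) * R^(m-1) * vs^(m+1) * t) = Real.exp (-(K * t)) ^ 3 := by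
      rw [← Real.exp_nat_mul]
      congr 1
      rw [hKdef, hCdef]; push_cast; ring
    have hgoal_eq : π - 2 * Real.cot (φ0/2) * Real.exp (-(1/2) * R^(m-1) * vs^(m+1) * t)
        + (2/3) * (Real.cot (φ0/2))^3 * Real.exp (-(3/2) * R^(m-1) * vs^(m+1) * t)
        = π - 2 * L + (2/3) * L ^ 3 := by
      rw [hE1, hE2, hLdef]; ring
    rw [hφ_eq t ht.le, hgoal_eq]
    nlinarith [h6, h7]
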